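/- (Lemma 1, bound on x̃) Under the DC-Grad recurrences, for every k ≥ 0: ‖x̃^(k+1)‖ ≤ λ·‖x̃^(k)‖ + λ·α_max·(1 + r_α)·‖z̃^(k)‖ + λ·r_α·‖mean(α^(k)·z^(k))‖. -/

import Mathlib

open scoped BigOperators
open Filter

noncomputable section

/-- Row-space: each agent holds a vector in ℝⁿ (Euclidean). -/
abbrev Vec (n : ℕ) := EuclideanSpace ℝ (Fin n)

/-- A "matrix" in ℝ^{N×n}, represented row-wise. -/
abbrev Mat (N n : ℕ) := Fin N → Vec n

/-- Row-mean operator `B ↦ J·B` with `J = (1/N)·11ᵀ`. -/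
def meanM {N n : ℕ} (B : Mat N n) : Mat N n := fun _ => (N : ℝ)⁻¹ • ∑ i, B i

/-- Consensus violation `B̃ = B − B̄`. -/
def tilde {N n : ℕ} (B : Mat N n) : Mat N n := B - meanM B

/-- Frobenius norm of a row-wise matrix. -/
def fnorm {N n : ℕ} (B : Mat N n) : ℝ := Real.sqrt (∑ i, ‖B i‖ ^ 2)

/-- Spectral norm (ℓ₂ operator norm) of a square matrix. -/
def specNorm {N : ℕ} (A : Matrix (Fin N) (Fin N) ℝ) : ℝ :=
  ‖LinearMap.toContinuousLinearMap (Matrix.toEuclideanLin A)‖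

/-- Action of an N×N matrix on a row-wise N×n matrix. -/
def Wact {N n : ℕ} (W : Matrix (Fin N) (Fin N) ℝ) (B : Mat N n) : Mat N n :=
  fun i => ∑ j, W i j • B j

/-- Action of a diagonal matrix `diag a` on a row-wise matrix. -/
def dAct {N n : ℕ} (a : Fin N → ℝ) (B : Mat N n) : Mat N n := fun i => a i • B i

/-- The matrix of row-wise gradients: i-th row is `∇f_i(x_i)ᵀ`. -/
def gRow {N n : ℕ} (f : Fin N → Vec n → ℝ) (x : Mat N n) : Mat N n :=
  fun i => gradient (f i) (x i)

/-- The all-(1/N) matrix `J = (1/N)·11ᵀ`. -/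
def Jmat (N : ℕ) : Matrix (Fin N) (Fin N) ℝ := Matrix.of fun _ _ => (N : ℝ)⁻¹

/-- Double stochasticity of `W`. -/
def DoublyStochastic {N : ℕ} (W : Matrix (Fin N) (Fin N) ℝ) : Prop :=
  (∀ i, ∑ j, W i j = 1) ∧ (∀ j, ∑ i, W i j = 1)


section Helpers

variable {N n : ℕ}

lemma fnorm_nonneg (B : Mat N n) : 0 ≤ fnorm B := Real.sqrt_nonneg _

lemma fnorm_mono {B C : Mat N n} (h : ∑ i, ‖B i‖ ^ 2 ≤ ∑ i, ‖C i‖ ^ 2) :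
    fnorm B ≤ fnorm C := Real.sqrt_le_sqrt h

lemma fnorm_eq_norm (B : Mat N n) :
    fnorm B = ‖(WithLp.equiv 2 (Fin N → Vec n)).symm B‖ := by
  rw [fnorm, PiLp.norm_eq_of_L2]
  rfl

lemma fnorm_add_le (B C : Mat N n) : fnorm (B + C) ≤ fnorm B + fnorm C := by
  simp only [fnorm_eq_norm]
  rw [show (WithLp.equiv 2 (Fin N → Vec n)).symm (B + C)
      = (WithLp.equiv 2 (Fin N → Vec n)).symm B + (WithLp.equiv 2 (Fin N → Vec n)).symm C
      from rfl]
  exact norm_add_le _ _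

lemma fnorm_neg (B : Mat N n) : fnorm (-B) = fnorm B := by
  unfold fnorm
  congr 1
  refine Finset.sum_congr rfl fun i _ => ?_
  rw [show (-B) i = -(B i) from rfl, norm_neg]

lemma fnorm_sub_le (B C : Mat N n) : fnorm (B - C) ≤ fnorm B + fnorm C := by
  rw [sub_eq_add_neg]
  exact le_trans (fnorm_add_le B (-C)) (by rw [fnorm_neg])

lemma norm_sq_eq_sum' (x : Vec n) : ‖x‖ ^ 2 = ∑ c, (x c) ^ 2 := by
  rw [EuclideanSpace.norm_eq, Real.sq_sqrt (Finset.sum_nonneg fun _ _ => sq_nonneg _)]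
  simp [sq_abs]

lemma specNorm_nonneg (A : Matrix (Fin N) (Fin N) ℝ) : 0 ≤ specNorm A := norm_nonneg _

lemma toEuclideanLin_le' (A : Matrix (Fin N) (Fin N) ℝ) (v : EuclideanSpace ℝ (Fin N)) :
    ‖Matrix.toEuclideanLin A v‖ ≤ specNorm A * ‖v‖ :=
  (LinearMap.toContinuousLinearMap (Matrix.toEuclideanLin A)).le_opNorm v

lemma abs_le_specNorm_diagonal (a : Fin N → ℝ) (i : Fin N) :
    |a i| ≤ specNorm (Matrix.diagonal a) := by
  have h := toEuclideanLin_le' (Matrix.diagonal a) (EuclideanSpace.single i 1)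
  rw [EuclideanSpace.norm_single] at h
  have he : Matrix.toEuclideanLin (Matrix.diagonal a) (EuclideanSpace.single i 1)
      = EuclideanSpace.single i (a i) := by
    ext j
    simp only [Matrix.toEuclideanLin_apply] at *
    rw [show (Matrix.diagonal a).mulVec (EuclideanSpace.single i 1).ofLp j
      = ((Matrix.diagonal a).mulVec (fun k => EuclideanSpace.single i (1:ℝ) k)) j from rfl]
    rw [Matrix.mulVec_diagonal]
    by_cases hj : j = i <;> simp [EuclideanSpace.single_apply, hj]
  rw [he, EuclideanSpace.norm_single] at h
  simpa using h

lemma wact_sumsq (A : Matrix (Fin N) (Fin N) ℝ) (B : Mat N n) :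
    ∑ i, ‖Wact A B i‖ ^ 2 ≤ specNorm A ^ 2 * ∑ j, ‖B j‖ ^ 2 := by
  set col : Fin n → EuclideanSpace ℝ (Fin N) :=
    fun c => (WithLp.equiv 2 (Fin N → ℝ)).symm (fun j => B j c) with hcol
  have happ : ∀ c i, Matrix.toEuclideanLin A (col c) i = ∑ j, A i j * B j c := by
    intro c i
    rw [Matrix.toEuclideanLin_apply]
    rfl
  have hW : ∀ i c, Wact A B i c = ∑ j, A i j * B j c := by
    intro i c
    show (∑ j, A i j • B j) c = _
    rw [show (∑ j, A i j • B j) c = ∑ j, (A i j • B j) c from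
      by rw [WithLp.ofLp_sum]; exact Finset.sum_apply c Finset.univ fun j => (A i j • B j).ofLp]
    rfl
  calc ∑ i, ‖Wact A B i‖ ^ 2 = ∑ c, ‖Matrix.toEuclideanLin A (col c)‖ ^ 2 := by
        simp only [norm_sq_eq_sum', hW, happ]
        exact Finset.sum_comm
    _ ≤ ∑ c, (specNorm A * ‖col c‖) ^ 2 := by
        refine Finset.sum_le_sum fun c _ => ?_
        exact pow_le_pow_left₀ (norm_nonneg _) (toEuclideanLin_le' A (col c)) 2
    _ = specNorm A ^ 2 * ∑ c, ‖col c‖ ^ 2 := by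
        rw [Finset.mul_sum]; simp [mul_pow]
    _ = specNorm A ^ 2 * ∑ j, ‖B j‖ ^ 2 := by
        congr 1
        simp only [norm_sq_eq_sum']
        rw [Finset.sum_comm]
        rfl

lemma wact_fnorm_le (A : Matrix (Fin N) (Fin N) ℝ) (B : Mat N n) :
    fnorm (Wact A B) ≤ specNorm A * fnorm B := by
  have h := Real.sqrt_le_sqrt (wact_sumsq A B)
  rw [Real.sqrt_mul (sq_nonneg _), Real.sqrt_sq (specNorm_nonneg A)] at h
  exact h

lemma sumsq_pyth (hN : (N : ℝ) ≠ 0) (B : Mat N n) :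
    ∑ i, ‖tilde B i‖ ^ 2 + ∑ i, ‖meanM B i‖ ^ 2 = ∑ i, ‖B i‖ ^ 2 := by
  set v : Vec n := (N : ℝ)⁻¹ • ∑ i, B i with hv
  have hSv : ∑ i, B i = (N : ℝ) • v := by
    rw [hv, smul_smul, mul_inv_cancel₀ hN, one_smul]
  have h1 : ∀ i, ‖tilde B i‖ ^ 2 = ‖B i‖ ^ 2 - 2 * (inner ℝ (B i) v : ℝ) + ‖v‖ ^ 2 :=
    fun i => norm_sub_sq_real (B i) v
  have h2 : ∑ i, ‖meanM B i‖ ^ 2 = (N : ℝ) * ‖v‖ ^ 2 := by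
    simp [meanM, ← hv, Finset.sum_const, Finset.card_univ]
  rw [h2]
  simp only [h1]
  rw [Finset.sum_add_distrib, Finset.sum_sub_distrib, Finset.sum_const, Finset.card_univ]
  have h3 : ∑ i, 2 * (inner ℝ (B i) v : ℝ) = 2 * ((N:ℝ) * ‖v‖^2) := by
    rw [← Finset.mul_sum, ← sum_inner, hSv, real_inner_smul_left,
      real_inner_self_eq_norm_sq]
  rw [h3]
  simp [Fintype.card_fin]
  ring

lemma fnorm_tilde_le (hN : (N : ℝ) ≠ 0) (B : Mat N n) : fnorm (tilde B) ≤ fnorm B :=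
  fnorm_mono (by
    have := sumsq_pyth hN B
    have h2 : 0 ≤ ∑ i, ‖meanM B i‖ ^ 2 := Finset.sum_nonneg fun _ _ => sq_nonneg _
    linarith)

lemma fnorm_meanM_le (hN : (N : ℝ) ≠ 0) (B : Mat N n) : fnorm (meanM B) ≤ fnorm B :=
  fnorm_mono (by
    have := sumsq_pyth hN B
    have h2 : 0 ≤ ∑ i, ‖tilde B i‖ ^ 2 := Finset.sum_nonneg fun _ _ => sq_nonneg _
    linarith)

lemma fnorm_dAct_le {a : Fin N → ℝ} {c : ℝ} (hc : 0 ≤ c) (h : ∀ i, |a i| ≤ c)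
    (B : Mat N n) : fnorm (dAct a B) ≤ c * fnorm B := by
  have hs : ∑ i, ‖dAct a B i‖ ^ 2 ≤ c ^ 2 * ∑ i, ‖B i‖ ^ 2 := by
    rw [Finset.mul_sum]
    refine Finset.sum_le_sum fun i _ => ?_
    rw [show dAct a B i = a i • B i from rfl, norm_smul, mul_pow]
    have : ‖a i‖ ^ 2 ≤ c ^ 2 := by
      rw [Real.norm_eq_abs]; nlinarith [h i, abs_nonneg (a i)]
    nlinarith [sq_nonneg ‖B i‖, sq_nonneg (a i)]
  have h := Real.sqrt_le_sqrt hs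
  rw [Real.sqrt_mul (sq_nonneg _), Real.sqrt_sq hc] at h
  exact h

lemma fnorm_rows_smul (c : Fin N → ℝ) (v : Vec n) :
    fnorm (fun i => c i • v) = Real.sqrt ((∑ i, c i ^ 2) * ‖v‖ ^ 2) := by
  rw [fnorm, Finset.sum_mul]
  congr 1
  refine Finset.sum_congr rfl fun i _ => ?_
  rw [norm_smul, mul_pow, Real.norm_eq_abs, sq_abs]

lemma tilde_add (B C : Mat N n) : tilde (B + C) = tilde B + tilde C := by
  funext i
  show (B + C) i - meanM (B + C) i = (B i - meanM B i) + (C i - meanM C i)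
  have : meanM (B + C) i = meanM B i + meanM C i := by
    show (N:ℝ)⁻¹ • ∑ j, (B j + C j) = (N:ℝ)⁻¹ • ∑ j, B j + (N:ℝ)⁻¹ • ∑ j, C j
    rw [Finset.sum_add_distrib, smul_add]
  rw [this]
  show B i + C i - _ = _
  abel

lemma tilde_wact (hN : (N : ℝ) ≠ 0) (W : Matrix (Fin N) (Fin N) ℝ)
    (hW : DoublyStochastic W) (C : Mat N n) :
    tilde (Wact W C) = Wact (W - Jmat N) (tilde C) := by
  set v : Vec n := (N : ℝ)⁻¹ • ∑ i, C i with hv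
  have hsum0 : ∑ j, tilde C j = 0 := by
    show ∑ j, (C j - v) = 0
    rw [Finset.sum_sub_distrib, Finset.sum_const, Finset.card_univ, Fintype.card_fin,
      ← Nat.cast_smul_eq_nsmul ℝ, hv, smul_smul, mul_inv_cancel₀ hN, one_smul, sub_self]
  have hmean : meanM (Wact W C) = meanM C := by
    funext i
    show (N:ℝ)⁻¹ • ∑ x, ∑ j, W x j • C j = (N:ℝ)⁻¹ • ∑ j, C j
    congr 1
    rw [Finset.sum_comm]
    refine Finset.sum_congr rfl fun j _ => ?_
    rw [← Finset.sum_smul, hW.2 j, one_smul]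
  funext i
  have lhs_eq : tilde (Wact W C) i = Wact W C i - v := by
    show Wact W C i - meanM (Wact W C) i = _
    rw [hmean]
    rfl
  rw [lhs_eq]
  show _ = ∑ j, (W - Jmat N) i j • tilde C j
  have hsplit : ∀ j, (W - Jmat N) i j • tilde C j
      = W i j • tilde C j - (N:ℝ)⁻¹ • tilde C j := by
    intro j
    rw [show (W - Jmat N) i j = W i j - (N:ℝ)⁻¹ from rfl, sub_smul]
  simp only [hsplit]
  rw [Finset.sum_sub_distrib, ← Finset.smul_sum, hsum0, smul_zero, sub_zero]
  have : ∑ j, W i j • tilde C j = ∑ j, (W i j • C j - W i j • v) := by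
    refine Finset.sum_congr rfl fun j _ => ?_
    rw [show tilde C j = C j - v from rfl, smul_sub]
  rw [this, Finset.sum_sub_distrib, ← Finset.sum_smul, hW.1 i, one_smul]
  rfl

end Helpers

/-- Lemma 1 (bound on `x̃`): under the DC-Grad `x`-recurrence with doubly stochastic `W`,
`λ = ‖W − J‖₂`, `α_max ≥ ‖α^(k)‖₂` and `r_α ≥ α_max/‖ᾱ^(k)‖₂` for all `k`:
`‖x̃^(k+1)‖ ≤ λ‖x̃^(k)‖ + λ·α_max(1+r_α)‖z̃^(k)‖ + λ·r_α‖mean(α^(k)z^(k))‖`. -/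
theorem stmt4 (N n : ℕ) (hN : 1 ≤ N) (hn : 1 ≤ n)
    (W : Matrix (Fin N) (Fin N) ℝ) (hW : DoublyStochastic W)
    (lam : ℝ) (hlam : lam = specNorm (W - Jmat N))
    (α : ℕ → Fin N → ℝ) (hα : ∀ k i, 0 ≤ α k i)
    (hαbar : ∀ k, 0 < (N : ℝ)⁻¹ * ∑ i, α k i)
    (αmax rα : ℝ)
    (hαmax : ∀ k, specNorm (Matrix.diagonal (α k)) ≤ αmax)
    (hrα : ∀ k, αmax / ((N : ℝ)⁻¹ * ∑ i, α k i) ≤ rα)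
    (x z : ℕ → Mat N n)
    (hx : ∀ k, x (k + 1) = Wact W (x k + dAct (α k) (z k))) :
    ∀ k, fnorm (tilde (x (k + 1))) ≤
      lam * fnorm (tilde (x k)) + lam * αmax * (1 + rα) * fnorm (tilde (z k))
        + lam * rα * fnorm (meanM (dAct (α k) (z k))) := by

  intro k
  have hNne : (N : ℝ) ≠ 0 := Nat.cast_ne_zero.mpr (by omega)
  have hlam0 : 0 ≤ lam := hlam ▸ specNorm_nonneg _
  set a := α k with ha
  set zk := z k with hzk
  have haabs : ∀ i, |a i| ≤ αmax :=
    fun i => le_trans (abs_le_specNorm_diagonal a i) (hαmax k)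
  have hai : ∀ i, a i ≤ αmax := fun i => le_trans (le_abs_self _) (haabs i)
  have hαmax0 : 0 ≤ αmax := le_trans (abs_nonneg _) (haabs ⟨0, hN⟩)
  set abar : ℝ := (N : ℝ)⁻¹ * ∑ i, a i with habar
  have habar_pos : 0 < abar := hαbar k
  have habar_le : abar ≤ αmax := by
    have h1 : ∑ i, a i ≤ (N : ℝ) * αmax := by
      calc ∑ i, a i ≤ ∑ _i : Fin N, αmax := Finset.sum_le_sum fun i _ => hai i
        _ = (N : ℝ) * αmax := by
            rw [Finset.sum_const, Finset.card_univ, Fintype.card_fin,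
              nsmul_eq_mul]
    have hNpos : (0:ℝ) < N := by positivity
    rw [habar]
    rw [inv_mul_le_iff₀ hNpos]
    linarith
  have hrα0 : 0 ≤ rα := le_trans (div_nonneg hαmax0 habar_pos.le) (hrα k)
  have hfrac : αmax / abar ≤ rα := hrα k
  -- recurrence step
  have hC : tilde (x (k + 1)) = Wact (W - Jmat N) (tilde (x k + dAct a zk)) := by
    rw [hx k, tilde_wact hNne W hW]
  have step1 : fnorm (tilde (x (k + 1))) ≤ lam * fnorm (tilde (x k + dAct a zk)) := by
    rw [hC, hlam]
    exact wact_fnorm_le _ _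
  -- decomposition of z
  have hzsplit : dAct a zk = dAct a (tilde zk) + dAct a (meanM zk) := by
    funext i
    show a i • zk i = a i • tilde zk i + a i • meanM zk i
    rw [← smul_add]
    congr 1
    show zk i = (zk i - meanM zk i) + meanM zk i
    abel
  have hdecomp : tilde (x k + dAct a zk)
      = tilde (x k) + (tilde (dAct a (tilde zk)) + tilde (dAct a (meanM zk))) := by
    rw [hzsplit, tilde_add, tilde_add]
  set v0 : Vec n := (N : ℝ)⁻¹ • ∑ i, zk i with hv0
  have hmean_apply : ∀ i, meanM zk i = v0 := fun _ => rfl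
  have key : ∀ (c : Fin N → ℝ) (w : Vec n),
      (N:ℝ)⁻¹ • ∑ i', c i' • w = ((N:ℝ)⁻¹ * ∑ i', c i') • w := by
    intro c w
    rw [← Finset.sum_smul]
    exact smul_smul _ _ _
  have hT2 : tilde (dAct a (meanM zk)) = fun i => (a i - abar) • v0 := by
    funext i
    show a i • v0 - (N:ℝ)⁻¹ • ∑ i', a i' • v0 = (a i - abar) • v0
    rw [key a v0, ← habar, ← sub_smul]
  have hM2 : meanM (dAct a (meanM zk)) = fun _ => abar • v0 := by
    funext i
    show (N:ℝ)⁻¹ • ∑ i', a i' • v0 = abar • v0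
    rw [key a v0, ← habar]
  set s : ℝ := Real.sqrt ((N : ℝ) * ‖v0‖ ^ 2) with hs
  have hs0 : 0 ≤ s := Real.sqrt_nonneg _
  have hT2bound : fnorm (tilde (dAct a (meanM zk))) ≤ αmax * s := by
    rw [hT2, fnorm_rows_smul]
    have hsum : (∑ i, (a i - abar) ^ 2) * ‖v0‖ ^ 2 ≤ αmax ^ 2 * ((N : ℝ) * ‖v0‖ ^ 2) := by
      have h1 : ∑ i, (a i - abar) ^ 2 ≤ (N : ℝ) * αmax ^ 2 := by
        calc ∑ i, (a i - abar) ^ 2 ≤ ∑ _i : Fin N, αmax ^ 2 := by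
              refine Finset.sum_le_sum fun i _ => ?_
              have := hα k i
              have := hai i
              nlinarith [habar_pos, habar_le]
          _ = (N : ℝ) * αmax ^ 2 := by
              rw [Finset.sum_const, Finset.card_univ, Fintype.card_fin, nsmul_eq_mul]
      nlinarith [sq_nonneg ‖v0‖, Finset.sum_nonneg (fun i (_ : i ∈ Finset.univ) => sq_nonneg (a i - abar))]
    calc Real.sqrt ((∑ i, (a i - abar) ^ 2) * ‖v0‖ ^ 2)
        ≤ Real.sqrt (αmax ^ 2 * ((N : ℝ) * ‖v0‖ ^ 2)) := Real.sqrt_le_sqrt hsum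
      _ = αmax * s := by rw [Real.sqrt_mul (sq_nonneg _), Real.sqrt_sq hαmax0, hs]
  have hM2eq : fnorm (meanM (dAct a (meanM zk))) = abar * s := by
    rw [hM2, fnorm_rows_smul]
    have : (∑ _i : Fin N, abar ^ 2) * ‖v0‖ ^ 2 = abar ^ 2 * ((N : ℝ) * ‖v0‖ ^ 2) := by
      rw [Finset.sum_const, Finset.card_univ, Fintype.card_fin, nsmul_eq_mul]
      ring
    rw [this, Real.sqrt_mul (sq_nonneg _), Real.sqrt_sq habar_pos.le, hs]
  -- abbreviations
  set Fx := fnorm (tilde (x k)) with hFx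
  set Fz := fnorm (tilde zk) with hFz
  set Fm := fnorm (meanM (dAct a zk)) with hFm
  have hFz0 : 0 ≤ Fz := fnorm_nonneg _
  -- T1 bound
  have hT1bound : fnorm (tilde (dAct a (tilde zk))) ≤ αmax * Fz :=
    le_trans (fnorm_tilde_le hNne _) (fnorm_dAct_le hαmax0 haabs _)
  -- M2 decomposition bound
  have hM2bound : fnorm (meanM (dAct a (meanM zk))) ≤ Fm + αmax * Fz := by
    have hdec : meanM (dAct a (meanM zk)) = meanM (dAct a zk) - meanM (dAct a (tilde zk)) := by
      have h1 : meanM (dAct a zk) = meanM (dAct a (tilde zk)) + meanM (dAct a (meanM zk)) := by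
        rw [hzsplit]
        funext i
        show (N:ℝ)⁻¹ • ∑ j, (dAct a (tilde zk) j + dAct a (meanM zk) j) = _
        rw [Finset.sum_add_distrib, smul_add]
        rfl
      rw [h1]; abel
    rw [hdec]
    refine le_trans (fnorm_sub_le _ _) ?_
    have h2 : fnorm (meanM (dAct a (tilde zk))) ≤ αmax * Fz :=
      le_trans (fnorm_meanM_le hNne _) (fnorm_dAct_le hαmax0 haabs _)
    exact add_le_add le_rfl h2
  -- combine T2
  have hT2final : fnorm (tilde (dAct a (meanM zk))) ≤ rα * (Fm + αmax * Fz) := by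
    have h1 : αmax * s = (αmax / abar) * (abar * s) := by
      field_simp
    have h2 : (αmax / abar) * (abar * s) ≤ rα * (abar * s) :=
      mul_le_mul_of_nonneg_right hfrac (by positivity)
    have h3 : rα * (abar * s) ≤ rα * (Fm + αmax * Fz) := by
      rw [← hM2eq]
      exact mul_le_mul_of_nonneg_left hM2bound hrα0
    exact le_trans hT2bound (h1 ▸ le_trans h2 h3)
  -- total decomposition bound
  have htot : fnorm (tilde (x k + dAct a zk))
      ≤ Fx + (αmax * Fz + rα * (Fm + αmax * Fz)) := by
    rw [hdecomp]
    refine le_trans (fnorm_add_le _ _) (add_le_add le_rfl ?_)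
    exact le_trans (fnorm_add_le _ _) (add_le_add hT1bound hT2final)
  calc fnorm (tilde (x (k + 1)))
      ≤ lam * (Fx + (αmax * Fz + rα * (Fm + αmax * Fz))) :=
        le_trans step1 (mul_le_mul_of_nonneg_left htot hlam0)
    _ = lam * Fx + lam * αmax * (1 + rα) * Fz + lam * rα * Fm := by ring
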